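/- For all points x, y in the open unit ball 𝔹ⁿ, both of the following lower bounds hold: tanh(ρ(x,y)/4) ≥ |x−y| / (2 − (|x|−|y|)²/2) and tanh(ρ(x,y)/4) ≥ |x−y| / (2 − (1/2)·(|x|−|y|)²/(1 − |x||y|)). -/
import Mathlib


/-- Hyperbolic distance in the open unit ball of `ℝⁿ`:
`ρ(x,y) = 2 · arsinh(|x−y| / (√(1−|x|²)·√(1−|y|²)))`. -/
noncomputable def hypDistBall {n : ℕ} (x y : EuclideanSpace ℝ (Fin n)) : ℝ :=
  2 * Real.arsinh (‖x - y‖ / (Real.sqrt (1 - ‖x‖ ^ 2) * Real.sqrt (1 - ‖y‖ ^ 2)))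

lemma tanh_half_arsinh (t : ℝ) :
    Real.tanh (Real.arsinh t / 2) = t / (Real.sqrt (1 + t ^ 2) + 1) := by
  set s := Real.arsinh t with hs
  have hc : (0:ℝ) < Real.cosh (s / 2) := Real.cosh_pos _
  have h1 : Real.sinh s = 2 * Real.sinh (s / 2) * Real.cosh (s / 2) := by
    have h := Real.sinh_two_mul (s / 2)
    rwa [show 2 * (s / 2) = s from by ring] at h
  have h2 : Real.cosh s = 2 * Real.cosh (s / 2) ^ 2 - 1 := by
    have h := Real.cosh_two_mul (s / 2)
    rw [show 2 * (s / 2) = s from by ring] at h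
    have h' := Real.cosh_sq_sub_sinh_sq (s / 2)
    linarith
  have h3 : Real.sqrt (1 + t ^ 2) = Real.cosh s := (Real.cosh_arsinh t).symm
  have h4 : t = Real.sinh s := (Real.sinh_arsinh t).symm
  rw [Real.tanh_eq_sinh_div_cosh]
  rw [h3]
  conv_rhs => rw [h4]
  rw [h1, h2]
  field_simp
  ring

set_option maxHeartbeats 1000000 in
theorem tanh_quarter_hypDist_lower_bound_three {n : ℕ} (x y : EuclideanSpace ℝ (Fin n))
    (hx : ‖x‖ < 1) (hy : ‖y‖ < 1) :
    Real.tanh (hypDistBall x y / 4) ≥ ‖x - y‖ / (2 - (‖x‖ - ‖y‖) ^ 2 / 2) ∧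
    Real.tanh (hypDistBall x y / 4) ≥
      ‖x - y‖ / (2 - (1 / 2) * (‖x‖ - ‖y‖) ^ 2 / (1 - ‖x‖ * ‖y‖)) := by
  obtain ⟨a, ha⟩ : ∃ a, ‖x‖ = a := ⟨_, rfl⟩
  obtain ⟨b, hb⟩ : ∃ b, ‖y‖ = b := ⟨_, rfl⟩
  obtain ⟨d, hd⟩ : ∃ d, ‖x - y‖ = d := ⟨_, rfl⟩
  have ha0 : 0 ≤ a := ha ▸ norm_nonneg x
  have hb0 : 0 ≤ b := hb ▸ norm_nonneg y
  have hd0 : 0 ≤ d := hd ▸ norm_nonneg _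
  have hdab : d ≤ a + b := by rw [← ha, ← hb, ← hd]; exact norm_sub_le x y
  rw [ha] at hx; rw [hb] at hy
  have hu : 0 < 1 - a * b := by nlinarith
  have ha2 : 0 < 1 - a ^ 2 := by nlinarith
  have hb2 : 0 < 1 - b ^ 2 := by nlinarith
  have hP2pos : (0:ℝ) < (1 - a ^ 2) * (1 - b ^ 2) := mul_pos ha2 hb2
  obtain ⟨P, hPdef⟩ : ∃ P, Real.sqrt ((1 - a ^ 2) * (1 - b ^ 2)) = P := ⟨_, rfl⟩
  have hPpos : 0 < P := hPdef ▸ Real.sqrt_pos.mpr hP2pos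
  have hPsq : P ^ 2 = (1 - a ^ 2) * (1 - b ^ 2) := by
    rw [← hPdef]; exact Real.sq_sqrt hP2pos.le
  have hsplit : Real.sqrt (1 - a ^ 2) * Real.sqrt (1 - b ^ 2) = P := by
    rw [← hPdef, Real.sqrt_mul ha2.le]
  have hhyp : hypDistBall x y / 4 = Real.arsinh (d / P) / 2 := by
    rw [hypDistBall, ha, hb, hd, hsplit]; ring
  obtain ⟨S, hSdef⟩ : ∃ S, Real.sqrt (P ^ 2 + d ^ 2) = S := ⟨_, rfl⟩
  have hSpos : 0 < S := hSdef ▸ Real.sqrt_pos.mpr (by positivity)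
  have hSsq : S ^ 2 = P ^ 2 + d ^ 2 := by
    rw [← hSdef]; exact Real.sq_sqrt (by positivity)
  have hsq1 : Real.sqrt (1 + (d / P) ^ 2) = S / P := by
    rw [← hSdef, eq_div_iff hPpos.ne', ← Real.sqrt_sq hPpos.le,
      ← Real.sqrt_mul (by positivity), Real.sqrt_sq hPpos.le]
    congr 1
    field_simp
  have hT : Real.tanh (hypDistBall x y / 4) = d / (S + P) := by
    rw [hhyp, tanh_half_arsinh, hsq1]
    rw [div_eq_div_iff (by positivity) (by positivity)]
    field_simp
  -- key bounds
  have hS_le : S ≤ 1 + a * b := by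
    rw [← hSdef]
    have h1 : P ^ 2 + d ^ 2 ≤ (1 + a * b) ^ 2 := by nlinarith
    calc Real.sqrt (P ^ 2 + d ^ 2) ≤ Real.sqrt ((1 + a * b) ^ 2) :=
          Real.sqrt_le_sqrt h1
      _ = 1 + a * b := Real.sqrt_sq (by nlinarith)
  have hv : P ^ 2 = (1 - a * b) ^ 2 - (a - b) ^ 2 := by rw [hPsq]; ring
  have hvle : (a - b) ^ 2 ≤ (1 - a * b) ^ 2 := by linarith [sq_nonneg P, hv]
  have h2u : (0:ℝ) ≤ 2 * (1 - a * b) ^ 2 - (a - b) ^ 2 := by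
    linarith [sq_nonneg (1 - a * b)]
  have hP_le : 2 * (1 - a * b) * P ≤ 2 * (1 - a * b) ^ 2 - (a - b) ^ 2 := by
    have e1 : 2 * (1 - a * b) * P = Real.sqrt ((2 * (1 - a * b)) ^ 2 * P ^ 2) := by
      rw [Real.sqrt_mul (by positivity), Real.sqrt_sq (by linarith), Real.sqrt_sq hPpos.le]
    have e2 : (2 * (1 - a * b)) ^ 2 * P ^ 2 ≤ (2 * (1 - a * b) ^ 2 - (a - b) ^ 2) ^ 2 := by
      rw [hv]; nlinarith [sq_nonneg ((a - b) ^ 2)]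
    calc 2 * (1 - a * b) * P = Real.sqrt ((2 * (1 - a * b)) ^ 2 * P ^ 2) := e1
      _ ≤ Real.sqrt ((2 * (1 - a * b) ^ 2 - (a - b) ^ 2) ^ 2) := Real.sqrt_le_sqrt e2
      _ = 2 * (1 - a * b) ^ 2 - (a - b) ^ 2 := Real.sqrt_sq h2u
  have hD2 : S + P ≤ 2 - (1 / 2) * (a - b) ^ 2 / (1 - a * b) := by
    have heq : 2 - (1 / 2) * (a - b) ^ 2 / (1 - a * b) - (S + P)
        = (1 + a * b - S)
          + ((2 * (1 - a * b) ^ 2 - (a - b) ^ 2) - 2 * (1 - a * b) * P)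
            / (2 * (1 - a * b)) := by
      field_simp
      ring
    have h2 : 0 ≤ ((2 * (1 - a * b) ^ 2 - (a - b) ^ 2) - 2 * (1 - a * b) * P)
        / (2 * (1 - a * b)) := div_nonneg (by linarith) (by linarith)
    linarith
  have hD2pos : 0 < 2 - (1 / 2) * (a - b) ^ 2 / (1 - a * b) := by
    have h : (1 / 2) * (a - b) ^ 2 / (1 - a * b) ≤ (1 - a * b) / 2 := by
      rw [div_le_div_iff₀ hu (by norm_num)]
      nlinarith
    nlinarith
  have hD12 : 2 - (1 / 2) * (a - b) ^ 2 / (1 - a * b) ≤ 2 - (a - b) ^ 2 / 2 := by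
    have h : (a - b) ^ 2 / 2 ≤ (1 / 2) * (a - b) ^ 2 / (1 - a * b) := by
      rw [div_le_div_iff₀ (by norm_num) hu]
      nlinarith [mul_nonneg (mul_nonneg ha0 hb0) (sq_nonneg (a - b))]
    linarith
  have hSP : 0 < S + P := by linarith
  have main2 : Real.tanh (hypDistBall x y / 4) ≥
      d / (2 - (1 / 2) * (a - b) ^ 2 / (1 - a * b)) := by
    rw [hT]
    exact div_le_div_of_nonneg_left hd0 hSP hD2
  rw [ha, hb, hd]
  refine ⟨?_, main2⟩
  calc d / (2 - (a - b) ^ 2 / 2)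
      ≤ d / (2 - (1 / 2) * (a - b) ^ 2 / (1 - a * b)) :=
        div_le_div_of_nonneg_left hd0 hD2pos hD12
    _ ≤ Real.tanh (hypDistBall x y / 4) := main2
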